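/- Let u : ℝ → ℝ be three times continuously differentiable (ContDiff ℝ 3), let t ∈ ℝ and α > 0. For h > 0 define the BDF2 value v h = ((1 + α)/(1 + 2*α)) * ((1 + α) * u t - (α^2/(1 + α)) * u (t - h/α) + h * deriv u (t + h)) and the generalized leapfrog predictor p h = u t + (1 + α) * h * (deriv u t) - α^2 * (u t - u (t - h/α)). Then (fun h => (v h - p h) / h^3) tends to ((α + 1) * (3*α + 2) / (6 * α * (2*α + 1))) * iteratedDeriv 3 u t as h → 0 within (0, ∞). -/

import Mathlib

open Filter Set

/-- Leading-order asymptotics of the corrector-minus-predictor difference: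
`(v h - p h) / h³ → ((α+1)(3α+2) / (6α(2α+1))) · u⁽³⁾(t)` as `h → 0⁺`. -/
theorem bdf2_minus_leapfrog_asymptotics (u : ℝ → ℝ) (hu : ContDiff ℝ 3 u)
    (t α : ℝ) (hα : 0 < α) :
    Filter.Tendsto
      (fun h : ℝ =>
        ((((1 + α) / (1 + 2 * α)) *
            ((1 + α) * u t - (α ^ 2 / (1 + α)) * u (t - h / α) + h * deriv u (t + h)))
          - (u t + (1 + α) * h * (deriv u t) - α ^ 2 * (u t - u (t - h / α)))) / h ^ 3)
      (nhdsWithin 0 (Set.Ioi 0))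
      (nhds (((α + 1) * (3 * α + 2) / (6 * α * (2 * α + 1))) * iteratedDeriv 3 u t)) := by
  have hα0 : α ≠ 0 := ne_of_gt hα
  have hα1 : (1 : ℝ) + α ≠ 0 := by positivity
  have hα2 : (1 : ℝ) + 2 * α ≠ 0 := by positivity
  -- smoothness facts
  have hu2 : ContDiff ℝ 2 (deriv u) := by
    rw [show (3 : WithTop ℕ∞) = 2 + 1 by norm_num, contDiff_succ_iff_deriv] at hu
    exact hu.2.2
  have hu3 : ContDiff ℝ 1 (deriv (deriv u)) := by
    rw [show (2 : WithTop ℕ∞) = 1 + 1 by norm_num, contDiff_succ_iff_deriv] at hu2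
    exact hu2.2.2
  have hdu : Differentiable ℝ u := hu.differentiable (by norm_num)
  have hdu1 : Differentiable ℝ (deriv u) := hu2.differentiable (by norm_num)
  have hdu2 : Differentiable ℝ (deriv (deriv u)) := hu3.differentiable (by norm_num)
  have hcont3 : Continuous (deriv (deriv (deriv u))) := (contDiff_one_iff_deriv.mp hu3).2
  -- elementary derivative facts
  have hφ : ∀ x : ℝ, HasDerivAt (fun h : ℝ => t - h / α) (-(1 / α)) x := fun x => by
    simpa using ((hasDerivAt_id x).div_const α).const_sub t
  have hψ : ∀ x : ℝ, HasDerivAt (fun h : ℝ => t + h) 1 x := fun x => by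
    simpa using (hasDerivAt_id x).const_add t
  have hA : ∀ (g : ℝ → ℝ), Differentiable ℝ g → ∀ x : ℝ,
      HasDerivAt (fun h : ℝ => g (t - h / α)) (deriv g (t - x / α) * (-(1 / α))) x := by
    intro g hg x
    exact ((hg _).hasDerivAt).comp x (hφ x)
  have hB : ∀ (g : ℝ → ℝ), Differentiable ℝ g → ∀ x : ℝ,
      HasDerivAt (fun h : ℝ => g (t + h)) (deriv g (t + x) * 1) x := by
    intro g hg x
    exact ((hg _).hasDerivAt).comp x (hψ x)
  -- the numerator and its two derivatives
  set N : ℝ → ℝ := fun h =>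
      ((((1 + α) / (1 + 2 * α)) *
          ((1 + α) * u t - (α ^ 2 / (1 + α)) * u (t - h / α) + h * deriv u (t + h)))
        - (u t + (1 + α) * h * (deriv u t) - α ^ 2 * (u t - u (t - h / α)))) with hNdef
  set N1 : ℝ → ℝ := fun h =>
      ((1 + α) / (1 + 2 * α)) *
        ((α ^ 2 / (1 + α)) * (1 / α) * deriv u (t - h / α) + deriv u (t + h)
          + h * deriv (deriv u) (t + h))
        - ((1 + α) * deriv u t - α * deriv u (t - h / α)) with hN1def
  set N2 : ℝ → ℝ := fun h =>
      ((1 + α) / (1 + 2 * α)) *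
        (-(1 / (1 + α)) * deriv (deriv u) (t - h / α) + 2 * deriv (deriv u) (t + h)
          + h * deriv (deriv (deriv u)) (t + h))
        - deriv (deriv u) (t - h / α) with hN2def
  have hN : ∀ x : ℝ, HasDerivAt N (N1 x) x := by
    intro x
    have H :=
      ((((hasDerivAt_const x ((1 + α) * u t)).sub
            ((hA u hdu x).const_mul (α ^ 2 / (1 + α)))).add
          ((hasDerivAt_id x).mul (hB (deriv u) hdu1 x))).const_mul ((1 + α) / (1 + 2 * α))).sub
        (((hasDerivAt_const x (u t)).add
            (((hasDerivAt_id x).const_mul (1 + α)).mul_const (deriv u t))).sub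
          (((hasDerivAt_const x (u t)).sub (hA u hdu x)).const_mul (α ^ 2)))
    refine H.congr_deriv ?_
    simp only [hN1def, id_eq]
    field_simp
    ring
  have hN1 : ∀ x : ℝ, HasDerivAt N1 (N2 x) x := by
    intro x
    have H :=
      ((((hA (deriv u) hdu1 x).const_mul ((α ^ 2 / (1 + α)) * (1 / α))).add
            (hB (deriv u) hdu1 x)).add
          ((hasDerivAt_id x).mul (hB (deriv (deriv u)) hdu2 x))).const_mul
            ((1 + α) / (1 + 2 * α)) |>.sub
        ((hasDerivAt_const x ((1 + α) * deriv u t)).sub ((hA (deriv u) hdu1 x).const_mul α))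
    refine H.congr_deriv ?_
    simp only [hN2def, id_eq]
    field_simp
    ring
  -- limits to zero
  have hN0 : Filter.Tendsto N (nhdsWithin 0 (Set.Ioi 0)) (nhds 0) := by
    have hc : ContinuousAt N 0 := (hN 0).differentiableAt.continuousAt
    have h0 : N 0 = 0 := by
      simp only [hNdef]
      norm_num
      field_simp
      ring
    have h2 : Filter.Tendsto N (nhdsWithin 0 (Set.Ioi 0)) (nhds (N 0)) :=
      hc.tendsto.mono_left nhdsWithin_le_nhds
    rwa [h0] at h2
  have hN10 : Filter.Tendsto N1 (nhdsWithin 0 (Set.Ioi 0)) (nhds 0) := by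
    have hc : ContinuousAt N1 0 := (hN1 0).differentiableAt.continuousAt
    have h0 : N1 0 = 0 := by
      simp only [hN1def]
      norm_num
      field_simp
      ring
    have h2 : Filter.Tendsto N1 (nhdsWithin 0 (Set.Ioi 0)) (nhds (N1 0)) :=
      hc.tendsto.mono_left nhdsWithin_le_nhds
    rwa [h0] at h2
  -- slope limits
  have hd3 : HasDerivAt (deriv (deriv u)) (deriv (deriv (deriv u)) t) t :=
    (hdu2 t).hasDerivAt
  have T1 : Filter.Tendsto (fun h : ℝ => (deriv (deriv u) (t + h) - deriv (deriv u) t) / h)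
      (nhdsWithin 0 (Set.Ioi 0)) (nhds (deriv (deriv (deriv u)) t)) := by
    have := hd3.tendsto_slope_zero_right
    refine this.congr fun h => ?_
    simp [smul_eq_mul, div_eq_inv_mul]
  have Tmap : Filter.Tendsto (fun h : ℝ => -(h / α)) (nhdsWithin 0 (Set.Ioi 0))
      (nhdsWithin 0 {x : ℝ | x ≠ 0}) := by
    rw [tendsto_nhdsWithin_iff]
    constructor
    · have : Filter.Tendsto (fun h : ℝ => -(h / α)) (nhds 0) (nhds (-(0 / α))) :=
        ((continuous_id.div_const α).neg).tendsto 0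
      have h2 : Filter.Tendsto (fun h : ℝ => -(h / α)) (nhdsWithin 0 (Set.Ioi 0)) (nhds (-(0 / α))) :=
        this.mono_left nhdsWithin_le_nhds
      simpa using h2
    · filter_upwards [self_mem_nhdsWithin] with h hh
      have : (0 : ℝ) < h := hh
      have : h / α > 0 := div_pos this hα
      show -(h / α) ≠ 0
      intro hc
      rw [neg_eq_zero] at hc
      linarith
  have T2 : Filter.Tendsto (fun h : ℝ => (deriv (deriv u) (t - h / α) - deriv (deriv u) t) / h)
      (nhdsWithin 0 (Set.Ioi 0)) (nhds (-(1 / α) * deriv (deriv (deriv u)) t)) := by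
    have hslope := hd3.tendsto_slope_zero
    have hcomp := hslope.comp Tmap
    have := hcomp.const_mul (-(1 / α))
    refine this.congr' ?_
    filter_upwards [self_mem_nhdsWithin] with h hh
    have hh0 : (0 : ℝ) < h := hh
    have hne : h ≠ 0 := ne_of_gt hh0
    simp only [Function.comp_def, smul_eq_mul]
    rw [show t + -(h / α) = t - h / α by ring]
    field_simp
  have T3 : Filter.Tendsto (fun h : ℝ => deriv (deriv (deriv u)) (t + h))
      (nhdsWithin 0 (Set.Ioi 0)) (nhds (deriv (deriv (deriv u)) t)) := by
    have : Filter.Tendsto (fun h : ℝ => t + h) (nhds (0 : ℝ)) (nhds (t + 0)) :=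
      (continuous_const.add continuous_id).tendsto 0
    have h2 : Filter.Tendsto (fun h : ℝ => t + h) (nhds (0:ℝ)) (nhds t) := by simpa using this
    exact (hcont3.continuousAt.tendsto.comp h2).mono_left nhdsWithin_le_nhds
  -- limit of N2 h / (6 h)
  have stepA : Filter.Tendsto (fun h : ℝ => N2 h / (6 * h)) (nhdsWithin 0 (Set.Ioi 0))
      (nhds (((α + 1) * (3 * α + 2) / (6 * α * (2 * α + 1))) * iteratedDeriv 3 u t)) := by
    have TG := ((((T2.const_mul (-(1 / (1 + α)))).add (T1.const_mul 2)).add T3).const_mul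
        ((1 + α) / (1 + 2 * α))).sub T2 |>.const_mul (1 / 6)
    have heq : ∀ᶠ h in nhdsWithin (0:ℝ) (Set.Ioi 0),
        (1 / 6) * (((1 + α) / (1 + 2 * α)) *
            (-(1 / (1 + α)) * ((deriv (deriv u) (t - h / α) - deriv (deriv u) t) / h)
              + 2 * ((deriv (deriv u) (t + h) - deriv (deriv u) t) / h)
              + deriv (deriv (deriv u)) (t + h))
          - (deriv (deriv u) (t - h / α) - deriv (deriv u) t) / h) = N2 h / (6 * h) := by
      filter_upwards [self_mem_nhdsWithin] with h hh
      have hne : h ≠ 0 := ne_of_gt hh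
      simp only [hN2def]
      field_simp
      ring
    have := TG.congr' heq
    convert this using 2
    rw [iteratedDeriv_succ, iteratedDeriv_succ, iteratedDeriv_succ, iteratedDeriv_zero]
    field_simp
    ring
  -- L'Hôpital, twice
  have hIoi : ∀ᶠ x in nhdsWithin (0:ℝ) (Set.Ioi 0), (0:ℝ) < x := self_mem_nhdsWithin
  have stepB : Filter.Tendsto (fun h : ℝ => N1 h / (3 * h ^ 2)) (nhdsWithin 0 (Set.Ioi 0))
      (nhds (((α + 1) * (3 * α + 2) / (6 * α * (2 * α + 1))) * iteratedDeriv 3 u t)) := by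
    refine HasDerivAt.lhopital_zero_nhdsGT (f' := N2) (g' := fun x => 6 * x)
      (Filter.Eventually.of_forall hN1) (Filter.Eventually.of_forall fun x => ?_)
      (hIoi.mono fun x hx => by positivity) hN10 ?_ stepA
    · have := ((hasDerivAt_pow 2 x).const_mul 3)
      exact this.congr_deriv (by push_cast; ring)
    · have : Filter.Tendsto (fun h : ℝ => 3 * h ^ 2) (nhds 0) (nhds (3 * 0 ^ 2)) :=
        (continuous_const.mul (continuous_pow 2)).tendsto 0
      simpa using this.mono_left nhdsWithin_le_nhds
  have stepC : Filter.Tendsto (fun h : ℝ => N h / h ^ 3) (nhdsWithin 0 (Set.Ioi 0))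
      (nhds (((α + 1) * (3 * α + 2) / (6 * α * (2 * α + 1))) * iteratedDeriv 3 u t)) := by
    refine HasDerivAt.lhopital_zero_nhdsGT (f' := N1) (g' := fun x => 3 * x ^ 2)
      (Filter.Eventually.of_forall hN) (Filter.Eventually.of_forall fun x => ?_)
      (hIoi.mono fun x hx => by positivity) hN0 ?_ stepB
    · have := hasDerivAt_pow 3 x
      exact this.congr_deriv (by push_cast; ring)
    · have : Filter.Tendsto (fun h : ℝ => h ^ 3) (nhds 0) (nhds ((0:ℝ) ^ 3)) :=
        (continuous_pow 3).tendsto 0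
      simpa using this.mono_left nhdsWithin_le_nhds
  exact stepC
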